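/- Let n, c, s, λ be integers with n, c ≥ 2, s ∈ [c-1], n ≥ c(c-1), c | n, and min{s+1, c-s+1} ≤ λ ≤ c. With t = sn/c, we have m(n, t, λ; s+1, c-s+1) ≤ ((λ-1)/c)·binom(n,t). -/

import Mathlib

open Finset

lemma card_filter_comp_equiv {α : Type*} [Fintype α] (e : α ≃ α) (p : α → Prop) [DecidablePred p] :
    #(univ.filter fun x => p (e x)) = #(univ.filter p) := by
  apply Finset.card_nbij' (i := fun x : α => e x) (j := fun x : α => e.symm x)
  · intro a ha; simp_all
  · intro a ha; simp_all
  · intro a _; simp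
  · intro a _; simp

lemma card_zmod_val_lt (c s : ℕ) [NeZero c] (hs : s ≤ c) :
    #((univ : Finset (ZMod c)).filter fun r => r.val < s) = s := by
  have h : #((univ : Finset (ZMod c)).filter fun r => r.val < s) = #(Finset.range s) := by
    apply Finset.card_nbij' (i := fun r : ZMod c => r.val) (j := fun m : ℕ => (m : ZMod c))
    · intro a ha; simp_all [Finset.mem_range]
    · intro a ha; simp only [Finset.mem_coe, Finset.mem_range] at ha
      simp [ZMod.val_cast_of_lt (lt_of_lt_of_le ha hs), ha]
    · intro a _; exact ZMod.natCast_rightInverse a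
    · intro a ha; simp only [Finset.mem_coe, Finset.mem_range] at ha
      exact ZMod.val_cast_of_lt (lt_of_lt_of_le ha hs)
  rw [h, Finset.card_range]

lemma existsPermImage {α : Type*} [Fintype α] [DecidableEq α] {S S' : Finset α}
    (h : #S = #S') : ∃ σ : Equiv.Perm α, S.image ⇑σ = S' := by
  have hcompl : #(Sᶜ) = #(S'ᶜ) := by
    rw [Finset.card_compl, Finset.card_compl, h]
  let e1 : {x // x ∈ S} ≃ {x // x ∈ S'} := Finset.equivOfCardEq h
  let e2 : {x // x ∈ Sᶜ} ≃ {x // x ∈ S'ᶜ} := Finset.equivOfCardEq hcompl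
  let e2' : {x // ¬ x ∈ S} ≃ {x // ¬ x ∈ S'} :=
    ((Equiv.subtypeEquivRight (fun x => (Finset.mem_compl (a := x)).symm)).trans e2).trans
      (Equiv.subtypeEquivRight (fun x => Finset.mem_compl (a := x)))
  let σ : Equiv.Perm α :=
    ((Equiv.sumCompl (· ∈ S)).symm.trans ((e1.sumCongr e2').trans (Equiv.sumCompl (· ∈ S'))))
  refine ⟨σ, ?_⟩
  have hsub : S.image ⇑σ ⊆ S' := by
    intro y hy
    obtain ⟨x, hx, rfl⟩ := Finset.mem_image.1 hy
    have hdec : (Equiv.sumCompl (· ∈ S)).symm x = Sum.inl ⟨x, hx⟩ :=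
      Equiv.sumCompl_symm_apply_of_pos hx
    simp only [σ, Equiv.trans_apply, hdec, Equiv.sumCongr_apply, Sum.map_inl,
      Equiv.sumCompl_apply_inl]
    exact (e1 ⟨x, hx⟩).2
  have hcard : #(S.image ⇑σ) = #S' := by
    rw [Finset.card_image_of_injective _ σ.injective, h]
  exact Finset.eq_of_subset_of_card_le hsub (le_of_eq hcard.symm)

lemma fiber_const {α : Type*} [Fintype α] [DecidableEq α] {T1 T2 S1 S2 : Finset α}
    (h1 : #T1 = #T2) (h2 : #S1 = #S2) :
    #((univ : Finset (Equiv.Perm α)).filter fun π : Equiv.Perm α => T1.image (⇑π) = S1)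
      = #((univ : Finset (Equiv.Perm α)).filter fun π : Equiv.Perm α => T2.image (⇑π) = S2) := by
  obtain ⟨σ, hσ⟩ := existsPermImage h1.symm   -- image σ T2 = T1
  obtain ⟨τ, hτ⟩ := existsPermImage h2         -- image τ S1 = S2
  apply Finset.card_nbij' (i := fun π : Equiv.Perm α => σ.trans (π.trans τ))
    (j := fun π : Equiv.Perm α => σ.symm.trans (π.trans τ.symm))
  · intro π hπ
    simp only [Finset.mem_coe, Finset.mem_filter, Finset.mem_univ, true_and] at hπ ⊢
    show T2.image (⇑τ ∘ ⇑π ∘ ⇑σ) = S2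
    rw [← Finset.image_image, ← Finset.image_image, hσ, hπ, hτ]
  · intro π hπ
    simp only [Finset.mem_coe, Finset.mem_filter, Finset.mem_univ, true_and] at hπ ⊢
    show T1.image (⇑τ.symm ∘ ⇑π ∘ ⇑σ.symm) = S1
    rw [← Finset.image_image, ← Finset.image_image]
    have hT1 : T1.image ⇑σ.symm = T2 := by
      rw [← hσ, Finset.image_image]; simp
    rw [hT1, hπ, ← hτ, Finset.image_image]; simp
  · intro π _; ext x; simp
  · intro π _; ext x; simp

section KeyBound

variable {n c q s t lam : ℕ}

lemma key_bound (n c s lam t : ℕ) (hn : 2 ≤ n) (hc : 2 ≤ c) (hs1 : 1 ≤ s)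
    (hs2 : s ≤ c - 1) (hncc : c * (c - 1) ≤ n) (hdvd : c ∣ n)
    (hlam1 : min (s + 1) (c - s + 1) ≤ lam) (hlam2 : lam ≤ c)
    (ht : t = s * n / c) (G : Finset (Finset (Fin n)))
    (hGcard : ∀ S ∈ G, S.card = t)
    (hno : ¬ ∃ A : Fin lam → Finset (Fin n), (∀ i, A i ∈ G) ∧
      (∀ B : Finset (Fin lam), B.card = s + 1 → B.inf A = ∅) ∧
      (∀ B : Finset (Fin lam), B.card = c - s + 1 → B.sup A = Finset.univ)) :
    c * G.card ≤ (lam - 1) * Nat.choose n t := by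
  haveI : NeZero c := ⟨by omega⟩
  have hc0 : 0 < c := by omega
  set q := n / c with hqdef
  have hn' : n = c * q := (Nat.mul_div_cancel' hdvd).symm
  have hq : 0 < q := by
    rcases Nat.eq_zero_or_pos q with h | h
    · rw [h, mul_zero] at hn'; omega
    · exact h
  have ht' : t = s * q := by
    rw [ht, hn', show s * (c * q) = c * (s * q) by ring, Nat.mul_div_cancel_left _ hc0]
  have hs' : s ≤ c := by omega
  -- blocks and arcs
  set blk : Fin n → ZMod c := fun x => ((x.1 / q : ℕ) : ZMod c) with hblkdef
  have hblkval : ∀ x : Fin n, (blk x).val = x.1 / q := by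
    intro x
    apply ZMod.val_cast_of_lt
    rw [Nat.div_lt_iff_lt_mul hq]
    have := x.2
    omega
  set T : ZMod c → Finset (Fin n) := fun j => univ.filter (fun x => (blk x - j).val < s)
    with hTdef
  have hmem : ∀ (x : Fin n) (j : ZMod c), x ∈ T j ↔ (blk x - j).val < s := by
    intro x j; simp [hTdef]
  -- each point is in exactly s arcs
  have hJ : ∀ x : Fin n, #((univ : Finset (ZMod c)).filter fun j => x ∈ T j) = s := by
    intro x
    have h1 : ((univ : Finset (ZMod c)).filter fun j => x ∈ T j)
        = (univ.filter fun j : ZMod c => ((Equiv.subLeft (blk x)) j).val < s) := by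
      apply Finset.filter_congr
      intro j _
      simp [hmem, Equiv.subLeft]
    rw [h1, card_filter_comp_equiv (Equiv.subLeft (blk x)) (fun r => r.val < s),
      card_zmod_val_lt c s hs']
  -- each arc has exactly t elements
  have hT : ∀ j : ZMod c, #(T j) = t := by
    intro j
    rw [ht']
    have hb : ∀ p : ZMod c × Fin q, (p.1 + j).val * q + p.2.1 < n := by
      intro p
      have h1 : (p.1 + j).val < c := ZMod.val_lt _
      have h2 : p.2.1 < q := p.2.2
      have h3 : ((p.1 + j).val + 1) * q ≤ c * q := Nat.mul_le_mul_right q (by omega)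
      have : (p.1 + j).val * q + q ≤ c * q := by nlinarith
      omega
    have hcard : #(T j) = #(((univ : Finset (ZMod c)).filter fun r => r.val < s) ×ˢ
        (univ : Finset (Fin q))) := by
      apply Finset.card_nbij'
        (i := fun x : Fin n => (blk x - j, ⟨x.1 % q, Nat.mod_lt _ hq⟩))
        (j := fun p : ZMod c × Fin q => ⟨(p.1 + j).val * q + p.2.1, hb p⟩)
      · intro x hx
        rw [Finset.mem_coe, hmem] at hx
        exact Finset.mem_product.2 ⟨Finset.mem_filter.2 ⟨Finset.mem_univ _, hx⟩, Finset.mem_univ _⟩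
      · intro p hp
        simp only [Finset.mem_coe, Finset.mem_product, Finset.mem_filter, Finset.mem_univ, true_and] at hp
        beta_reduce; rw [Finset.mem_coe, hmem]
        have hdiv : ((p.1 + j).val * q + p.2.1) / q = (p.1 + j).val := by
          rw [mul_comm, Nat.mul_add_div hq, Nat.div_eq_of_lt p.2.2, add_zero]
        have hblk : blk ⟨(p.1 + j).val * q + p.2.1, hb p⟩ = p.1 + j := by
          simp only [hblkdef]
          rw [hdiv]
          exact ZMod.natCast_rightInverse _
        rw [hblk, add_sub_cancel_right]
        exact hp.1
      · intro x hx
        apply Fin.ext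
        simp only
        rw [sub_add_cancel, hblkval, mul_comm, Nat.div_add_mod]
      · intro p hp
        have hdiv : ((p.1 + j).val * q + p.2.1) / q = (p.1 + j).val := by
          rw [mul_comm, Nat.mul_add_div hq, Nat.div_eq_of_lt p.2.2, add_zero]
        have hblk : blk ⟨(p.1 + j).val * q + p.2.1, hb p⟩ = p.1 + j := by
          simp only [hblkdef]
          rw [hdiv]
          exact ZMod.natCast_rightInverse _
        have hmod : ((p.1 + j).val * q + p.2.1) % q = p.2.1 := by
          rw [mul_comm, Nat.mul_add_mod, Nat.mod_eq_of_lt p.2.2]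
        ext
        · beta_reduce; rw [hblk, add_sub_cancel_right]
        · simp [hmod]
    rw [hcard, Finset.card_product, card_zmod_val_lt c s hs', Finset.card_univ,
      Fintype.card_fin]
  -- per-permutation bound
  have hlam2' : 2 ≤ lam := by omega
  have hrow : ∀ π : Equiv.Perm (Fin n),
      #((univ : Finset (ZMod c)).filter fun j => (T j).image (⇑π) ∈ G) ≤ lam - 1 := by
    intro π
    by_contra hcon
    push_neg at hcon
    have hlamle : lam ≤ #((univ : Finset (ZMod c)).filter fun j => (T j).image (⇑π) ∈ G) := by
      omega
    obtain ⟨F', hF'sub, hF'card⟩ := Finset.exists_subset_card_eq hlamle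
    let e : Fin lam → ZMod c := fun i => (F'.equivFin.symm (Fin.cast hF'card.symm i) : ZMod c)
    have he_mem : ∀ i, e i ∈ F' := fun i => Finset.coe_mem _
    have he_inj : Function.Injective e := by
      intro a b hab
      have := Subtype.ext hab
      have := F'.equivFin.symm.injective this
      simpa [Fin.ext_iff] using congrArg Fin.val this
    apply hno
    refine ⟨fun i => (T (e i)).image (⇑π), fun i => ?_, ?_, ?_⟩
    · have := hF'sub (he_mem i)
      exact (Finset.mem_filter.1 this).2
    · intro Bf hBf
      apply Finset.eq_empty_of_forall_notMem
      intro y hy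
      rw [Finset.mem_inf] at hy
      set x := π.symm y with hx
      have hxT : ∀ i ∈ Bf, x ∈ T (e i) := by
        intro i hi
        obtain ⟨z, hz, hzy⟩ := Finset.mem_image.1 (hy i hi)
        have : z = x := by
          rw [hx, ← hzy]; simp
        rwa [← this]
      have h1 : #(Bf.image e) = s + 1 := by
        rw [Finset.card_image_of_injective _ he_inj, hBf]
      have h2 : Bf.image e ⊆ (univ : Finset (ZMod c)).filter fun j => x ∈ T j := by
        intro j hj
        obtain ⟨i, hi, rfl⟩ := Finset.mem_image.1 hj
        simp only [Finset.mem_filter, Finset.mem_univ, true_and]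
        exact hxT i hi
      have := Finset.card_le_card h2
      rw [hJ x, h1] at this
      omega
    · intro Bf hBf
      apply Finset.eq_univ_of_forall
      intro y
      rw [Finset.mem_sup]
      set x := π.symm y with hx
      have h1 : #(Bf.image e) = c - s + 1 := by
        rw [Finset.card_image_of_injective _ he_inj, hBf]
      have h2 : ((Bf.image e) ∩ ((univ : Finset (ZMod c)).filter fun j => x ∈ T j)).Nonempty := by
        rw [← Finset.card_pos]
        have hcu := Finset.card_inter_add_card_union (Bf.image e)
          ((univ : Finset (ZMod c)).filter fun j => x ∈ T j)
        have hle : #((Bf.image e) ∪ ((univ : Finset (ZMod c)).filter fun j => x ∈ T j)) ≤ c := by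
          have := Finset.card_le_univ ((Bf.image e) ∪ ((univ : Finset (ZMod c)).filter fun j => x ∈ T j))
          rwa [ZMod.card] at this
        rw [h1, hJ x] at hcu
        omega
      obtain ⟨j, hj⟩ := h2
      rw [Finset.mem_inter] at hj
      obtain ⟨i, hi, rfl⟩ := Finset.mem_image.1 hj.1
      refine ⟨i, hi, ?_⟩
      have hxj := (Finset.mem_filter.1 hj.2).2
      exact Finset.mem_image.2 ⟨x, hxj, by rw [hx]; simp⟩
  -- fiber counting
  set K : ℕ := #((univ : Finset (Equiv.Perm (Fin n))).filter
    fun π : Equiv.Perm (Fin n) => (T 0).image (⇑π) = T 0) with hKdef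
  have hKt : ∀ (T1 S1 : Finset (Fin n)), #T1 = t → #S1 = t →
      #((univ : Finset (Equiv.Perm (Fin n))).filter
        fun π : Equiv.Perm (Fin n) => T1.image (⇑π) = S1) = K := by
    intro T1 S1 hT1 hS1
    rw [hKdef]
    exact fiber_const (by rw [hT1, hT 0]) (by rw [hS1, hT 0])
  have hfact : Fintype.card (Equiv.Perm (Fin n)) = Nat.choose n t * K := by
    have hmapsto : ∀ π ∈ (univ : Finset (Equiv.Perm (Fin n))),
        (T 0).image (⇑π) ∈ Finset.powersetCard t (univ : Finset (Fin n)) := by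
      intro π _
      rw [Finset.mem_powersetCard_univ, Finset.card_image_of_injective _ π.injective, hT 0]
    have h0 := Finset.card_eq_sum_card_fiberwise hmapsto
    rw [Finset.card_univ] at h0
    have h2 : ∀ S ∈ Finset.powersetCard t (univ : Finset (Fin n)),
        #((univ : Finset (Equiv.Perm (Fin n))).filter
          fun π : Equiv.Perm (Fin n) => (T 0).image (⇑π) = S) = K := by
      intro S hS
      rw [Finset.mem_powersetCard_univ] at hS
      exact hKt (T 0) S (hT 0) hS
    rw [h0, Finset.sum_congr rfl h2, Finset.sum_const, smul_eq_mul,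
      Finset.card_powersetCard, Finset.card_univ, Fintype.card_fin]
  have hK0 : 0 < K := by
    by_contra h
    have : K = 0 := by omega
    rw [this, mul_zero] at hfact
    have := Fintype.card_pos (α := Equiv.Perm (Fin n))
    omega
  -- column count
  have hcol : ∀ j : ZMod c,
      #((univ : Finset (Equiv.Perm (Fin n))).filter
        fun π : Equiv.Perm (Fin n) => (T j).image (⇑π) ∈ G) = G.card * K := by
    intro j
    have hmapsto : ∀ π ∈ ((univ : Finset (Equiv.Perm (Fin n))).filter
        fun π : Equiv.Perm (Fin n) => (T j).image (⇑π) ∈ G), (T j).image (⇑π) ∈ G :=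
      fun π hπ => (Finset.mem_filter.1 hπ).2
    have h1 := Finset.card_eq_sum_card_fiberwise hmapsto
    have h2 : ∀ S ∈ G, #((((univ : Finset (Equiv.Perm (Fin n))).filter
          fun π : Equiv.Perm (Fin n) => (T j).image (⇑π) ∈ G)).filter
          fun π : Equiv.Perm (Fin n) => (T j).image (⇑π) = S) = K := by
      intro S hS
      have heq : (((univ : Finset (Equiv.Perm (Fin n))).filter
          fun π : Equiv.Perm (Fin n) => (T j).image (⇑π) ∈ G).filter
          fun π : Equiv.Perm (Fin n) => (T j).image (⇑π) = S)
          = ((univ : Finset (Equiv.Perm (Fin n))).filter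
          fun π : Equiv.Perm (Fin n) => (T j).image (⇑π) = S) := by
        rw [Finset.filter_filter]
        apply Finset.filter_congr
        intro π _
        constructor
        · exact fun h => h.2
        · exact fun h => ⟨h ▸ hS, h⟩
      rw [heq]
      exact hKt (T j) S (hT j) (hGcard S hS)
    rw [h1, Finset.sum_congr rfl h2, Finset.sum_const, smul_eq_mul]
  -- double counting
  have hdouble : ∑ π : Equiv.Perm (Fin n),
      #((univ : Finset (ZMod c)).filter fun j => (T j).image (⇑π) ∈ G)
      = ∑ j : ZMod c, #((univ : Finset (Equiv.Perm (Fin n))).filter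
        fun π : Equiv.Perm (Fin n) => (T j).image (⇑π) ∈ G) := by
    simp_rw [Finset.card_filter]
    exact Finset.sum_comm
  have hupper : ∑ π : Equiv.Perm (Fin n),
      #((univ : Finset (ZMod c)).filter fun j => (T j).image (⇑π) ∈ G)
      ≤ Fintype.card (Equiv.Perm (Fin n)) * (lam - 1) := by
    calc ∑ π : Equiv.Perm (Fin n),
        #((univ : Finset (ZMod c)).filter fun j => (T j).image (⇑π) ∈ G)
        ≤ ∑ _π : Equiv.Perm (Fin n), (lam - 1) := Finset.sum_le_sum (fun π _ => hrow π)
      _ = Fintype.card (Equiv.Perm (Fin n)) * (lam - 1) := by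
          rw [Finset.sum_const, smul_eq_mul, Finset.card_univ]
  have hlower : ∑ j : ZMod c, #((univ : Finset (Equiv.Perm (Fin n))).filter
        fun π : Equiv.Perm (Fin n) => (T j).image (⇑π) ∈ G) = c * (G.card * K) := by
    rw [Finset.sum_congr rfl (fun j _ => hcol j), Finset.sum_const, smul_eq_mul,
      Finset.card_univ, ZMod.card]
  rw [hdouble, hlower, hfact] at hupper
  have : c * G.card * K ≤ (lam - 1) * Nat.choose n t * K := by
    calc c * G.card * K = c * (G.card * K) := by ring
      _ ≤ Nat.choose n t * K * (lam - 1) := hupper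
      _ = (lam - 1) * Nat.choose n t * K := by ring
  exact Nat.le_of_mul_le_mul_right this hK0

end KeyBound

/-- The generalized matching number `m(n,t,λ;k₁,k₂)`. -/
noncomputable def genMatch (n t lam k1 k2 : ℕ) : ℕ :=
  sSup {N | ∃ G : Finset (Finset (Fin n)),
    (∀ S ∈ G, S.card = t) ∧
    (¬ ∃ A : Fin lam → Finset (Fin n), (∀ i, A i ∈ G) ∧
      (∀ B : Finset (Fin lam), B.card = k1 → B.inf A = ∅) ∧
      (∀ B : Finset (Fin lam), B.card = k2 → B.sup A = Finset.univ)) ∧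
    G.card = N}

/-- For n, c ≥ 2, s ∈ [c-1], n ≥ c(c-1), c ∣ n,
min{s+1, c-s+1} ≤ λ ≤ c and t = sn/c, we have
m(n,t,λ;s+1,c-s+1) ≤ ((λ-1)/c)·binom(n,t). -/
theorem stmt19 (n c s lam t : ℕ) (hn : 2 ≤ n) (hc : 2 ≤ c) (hs1 : 1 ≤ s)
    (hs2 : s ≤ c - 1) (hncc : c * (c - 1) ≤ n) (hdvd : c ∣ n)
    (hlam1 : min (s + 1) (c - s + 1) ≤ lam) (hlam2 : lam ≤ c)
    (ht : t = s * n / c) :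
    c * genMatch n t lam (s + 1) (c - s + 1) ≤ (lam - 1) * Nat.choose n t := by
  have hc0 : 0 < c := by omega
  set Sset := {N | ∃ G : Finset (Finset (Fin n)),
    (∀ S ∈ G, S.card = t) ∧
    (¬ ∃ A : Fin lam → Finset (Fin n), (∀ i, A i ∈ G) ∧
      (∀ B : Finset (Fin lam), B.card = s + 1 → B.inf A = ∅) ∧
      (∀ B : Finset (Fin lam), B.card = (c - s + 1) → B.sup A = Finset.univ)) ∧
    G.card = N} with hSset
  have hgen : genMatch n t lam (s + 1) (c - s + 1) = sSup Sset := rfl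
  have hall : ∀ N ∈ Sset, c * N ≤ (lam - 1) * Nat.choose n t := by
    rintro N ⟨G, hGcard, hno, rfl⟩
    exact key_bound n c s lam t hn hc hs1 hs2 hncc hdvd hlam1 hlam2 ht G hGcard hno
  rw [hgen]
  rcases Set.eq_empty_or_nonempty Sset with he | hne
  · rw [he, csSup_empty]
    simp
  · have h1 : sSup Sset ≤ (lam - 1) * Nat.choose n t / c := by
      apply csSup_le hne
      intro N hN
      rw [Nat.le_div_iff_mul_le hc0, mul_comm]
      exact hall N hN
    calc c * sSup Sset ≤ c * ((lam - 1) * Nat.choose n t / c) :=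
          Nat.mul_le_mul_left c h1
      _ = (lam - 1) * Nat.choose n t / c * c := by ring
      _ ≤ (lam - 1) * Nat.choose n t := Nat.div_mul_le_self _ _
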